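/- If p ∈ (0,1) satisfies 40p⁴ + 32(1-p)p³ - 5 > 0 (in particular for all p > 0.518), then (C₄, C₅) is not (p, 1-p)-common; this is witnessed by the graphon W₁ equal to 1 on [0,1/2]² ∪ (1/2,1]² and 0 elsewhere, with W₂ = 1 - W₁, for which t(C₄,W₁) = 1/8 and t(C₅,W₂) = 0. -/

import Mathlib

open MeasureTheory Finset

/-- The uniform measure on the unit interval `[0,1]`, as a measure on `ℝ`. -/
noncomputable def unitM : Measure ℝ := volume.restrict (Set.Icc 0 1)

instance : SigmaFinite unitM := by unfold unitM; infer_instance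

/-- Value of a symmetric two-variable function on an unordered pair of vertices. -/
noncomputable def symEdge {α : Type*} (W : ℝ → ℝ → ℝ) (x : α → ℝ) : Sym2 α → ℝ :=
  Sym2.lift ⟨fun u v => (W (x u) (x v) + W (x v) (x u)) / 2, fun u v => by ring⟩

open Classical in
/-- Homomorphism density of a finite simple graph in a kernel. -/
noncomputable def homDensity {V : Type*} [Fintype V] (G : SimpleGraph V)
    (W : ℝ → ℝ → ℝ) : ℝ :=
  ∫ x : V → ℝ, ∏ e ∈ G.edgeFinset, symEdge W x e ∂(Measure.pi fun _ => unitM)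

/-- Number of edges of a graph. -/
noncomputable def eCount {V : Type*} (G : SimpleGraph V) : ℕ := G.edgeSet.ncard

def IsSymm2 (W : ℝ → ℝ → ℝ) : Prop := ∀ x y, W x y = W y x

/-- A kernel: bounded, symmetric, measurable. -/
def IsKernel (W : ℝ → ℝ → ℝ) : Prop :=
  Measurable (Function.uncurry W) ∧ IsSymm2 W ∧ ∃ C, ∀ x y, |W x y| ≤ C

/-- A graphon: symmetric measurable with values in `[0,1]`. -/
def IsGraphon (W : ℝ → ℝ → ℝ) : Prop :=
  Measurable (Function.uncurry W) ∧ IsSymm2 W ∧ ∀ x y, W x y ∈ Set.Icc (0:ℝ) 1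

/-- The pair `(G₁, G₂)` is `(p₁,p₂)`-common. -/
def IsCommonPair {V₁ V₂ : Type*} [Fintype V₁] [Fintype V₂]
    (G₁ : SimpleGraph V₁) (G₂ : SimpleGraph V₂) (p₁ p₂ : ℝ) : Prop :=
  ∀ W₁ W₂ : ℝ → ℝ → ℝ, IsGraphon W₁ → IsGraphon W₂ → (∀ x y, W₁ x y + W₂ x y = 1) →
    homDensity G₁ W₁ / (eCount G₁ * p₁ ^ (eCount G₁ - 1))
      + homDensity G₂ W₂ / (eCount G₂ * p₂ ^ (eCount G₂ - 1))
      ≥ p₁ / eCount G₁ + p₂ / eCount G₂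


open Classical in
noncomputable def Wp : ℝ → ℝ → ℝ := fun x y => if ((x ≤ 1/2) ↔ (y ≤ 1/2)) then 1 else 0

lemma Wp_symm (x y : ℝ) : Wp x y = Wp y x := by
  simp only [Wp]; exact if_congr Iff.comm rfl rfl

lemma Wp_meas : Measurable (Function.uncurry Wp) := by
  have hs : MeasurableSet {p : ℝ × ℝ | p.1 ≤ 1/2 ↔ p.2 ≤ 1/2} := by
    have : {p : ℝ × ℝ | p.1 ≤ 1/2 ↔ p.2 ≤ 1/2}
        = (Set.Iic (1/2:ℝ) ×ˢ Set.Iic (1/2:ℝ)) ∪ ((Set.Iic (1/2:ℝ))ᶜ ×ˢ (Set.Iic (1/2:ℝ))ᶜ) := by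
      ext ⟨a, b⟩
      simp only [Set.mem_setOf_eq, Set.mem_union, Set.mem_prod, Set.mem_Iic, Set.mem_compl_iff]
      tauto
    rw [this]
    exact ((measurableSet_Iic.prod measurableSet_Iic).union
      (measurableSet_Iic.compl.prod measurableSet_Iic.compl))
  have : Function.uncurry Wp = fun p : ℝ × ℝ => if (p.1 ≤ 1/2 ↔ p.2 ≤ 1/2) then (1:ℝ) else 0 := by
    ext ⟨a, b⟩; simp [Function.uncurry, Wp]
  rw [this]
  exact Measurable.ite hs measurable_const measurable_const

lemma Wp_graphon : IsGraphon Wp :=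
  ⟨Wp_meas, Wp_symm, fun x y => by unfold Wp; split <;> norm_num⟩

lemma unitM_prob : IsProbabilityMeasure unitM := by
  constructor
  simp [unitM, Real.volume_Icc]

lemma unitM_Iic : unitM (Set.Iic (1/2:ℝ)) = ENNReal.ofReal (1/2) := by
  have : Set.Iic (1/2:ℝ) ∩ Set.Icc 0 1 = Set.Icc 0 (1/2) := by
    ext t
    simp only [Set.mem_inter_iff, Set.mem_Iic, Set.mem_Icc]
    constructor
    · rintro ⟨h1, h2, _⟩; exact ⟨h2, h1⟩
    · rintro ⟨h1, h2⟩; exact ⟨h2, h1, by linarith⟩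
  rw [unitM, Measure.restrict_apply measurableSet_Iic, this, Real.volume_Icc]
  norm_num

lemma unitM_compl : unitM ((Set.Iic (1/2:ℝ))ᶜ) = ENNReal.ofReal (1/2) := by
  have : (Set.Iic (1/2:ℝ))ᶜ ∩ Set.Icc 0 1 = Set.Ioc (1/2) 1 := by
    ext t
    simp only [Set.mem_inter_iff, Set.mem_compl_iff, Set.mem_Iic, Set.mem_Icc, Set.mem_Ioc,
      not_le]
    constructor
    · rintro ⟨h1, _, h3⟩; exact ⟨h1, h3⟩
    · rintro ⟨h1, h2⟩; exact ⟨h1, by linarith, h2⟩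
  rw [unitM, Measure.restrict_apply measurableSet_Iic.compl, this, Real.volume_Ioc]
  norm_num

open Classical in
lemma key4 (x : Fin 4 → ℝ) :
    ∏ e ∈ (SimpleGraph.cycleGraph 4).edgeFinset, symEdge Wp x e
      = Set.indicator (Set.univ.pi fun _ : Fin 4 => Set.Iic (1/2:ℝ)) (fun _ => (1:ℝ)) x
        + Set.indicator (Set.univ.pi fun _ : Fin 4 => (Set.Iic (1/2:ℝ))ᶜ) (fun _ => (1:ℝ)) x := by
  have hE : (SimpleGraph.cycleGraph 4).edgeFinset
      = ({s(0,1), s(1,2), s(2,3), s(0,3)} : Finset (Sym2 (Fin 4))) := by decide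
  rw [hE, Finset.prod_insert (by decide), Finset.prod_insert (by decide),
    Finset.prod_insert (by decide), Finset.prod_singleton]
  have hse : ∀ (i j : Fin 4), symEdge Wp x s(i, j) = Wp (x i) (x j) := by
    intro i j
    simp only [symEdge, Sym2.lift_mk]
    rw [Wp_symm (x j) (x i)]
    ring
  have hind : ∀ (A : Set ℝ), Set.indicator (Set.univ.pi fun _ : Fin 4 => A) (fun _ => (1:ℝ)) x
      = if (x 0 ∈ A ∧ x 1 ∈ A ∧ x 2 ∈ A ∧ x 3 ∈ A) then 1 else 0 := by
    intro A
    rw [Set.indicator_apply]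
    congr 1
    simp only [Set.mem_pi, Set.mem_univ, forall_true_left, eq_iff_iff]
    constructor
    · intro h; exact ⟨h 0, h 1, h 2, h 3⟩
    · rintro ⟨h0, h1, h2, h3⟩ i
      fin_cases i <;> assumption
  rw [hse, hse, hse, hse, hind, hind]
  simp only [Set.mem_Iic, Set.mem_compl_iff]
  by_cases h0 : x 0 ≤ 1/2 <;> by_cases h1 : x 1 ≤ 1/2 <;> by_cases h2 : x 2 ≤ 1/2 <;>
    by_cases h3 : x 3 ≤ 1/2 <;>
    simp only [Wp, h0, h1, h2, h3, iff_true, iff_false, if_true, if_false, not_true, not_false_iff,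
      true_iff, false_iff, true_and, and_true, false_and, and_false, if_neg, not_not] <;>
    norm_num

lemma homDensity_eq {V : Type*} [Fintype V] (G : SimpleGraph V) [Fintype G.edgeSet]
    (W : ℝ → ℝ → ℝ) :
    homDensity G W
      = ∫ x : V → ℝ, ∏ e ∈ G.edgeFinset, symEdge W x e ∂(Measure.pi fun _ => unitM) := by
  rw [homDensity]
  congr 1
  exact funext fun x => Finset.prod_congr (by ext e; simp [SimpleGraph.mem_edgeFinset])
    fun _ _ => rfl

lemma hd4 : homDensity (SimpleGraph.cycleGraph 4) Wp = 1/8 := by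
  haveI : IsProbabilityMeasure unitM := unitM_prob
  set μ : Measure (Fin 4 → ℝ) := Measure.pi fun _ => unitM with hμ
  haveI : IsProbabilityMeasure μ := by rw [hμ]; infer_instance
  have hA : MeasurableSet (Set.univ.pi fun _ : Fin 4 => Set.Iic (1/2:ℝ)) :=
    MeasurableSet.univ_pi fun _ => measurableSet_Iic
  have hB : MeasurableSet (Set.univ.pi fun _ : Fin 4 => (Set.Iic (1/2:ℝ))ᶜ) :=
    MeasurableSet.univ_pi fun _ => measurableSet_Iic.compl
  rw [homDensity_eq]
  rw [MeasureTheory.integral_congr_ae (μ := Measure.pi fun _ : Fin 4 => unitM)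
    (MeasureTheory.ae_of_all _ key4)]
  rw [MeasureTheory.integral_add
    ((MeasureTheory.integrable_const (1:ℝ)).indicator hA)
    ((MeasureTheory.integrable_const (1:ℝ)).indicator hB)]
  rw [MeasureTheory.integral_indicator_const _ hA, MeasureTheory.integral_indicator_const _ hB]
  rw [measureReal_def, measureReal_def, Measure.pi_pi, Measure.pi_pi]
  simp only [unitM_Iic, unitM_compl, Finset.prod_const, Finset.card_univ, Fintype.card_fin,
    smul_eq_mul, mul_one, ENNReal.toReal_pow, ENNReal.toReal_ofReal (by norm_num : (0:ℝ) ≤ 1/2)]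
  norm_num

lemma key5 (x : Fin 5 → ℝ) :
    ∏ e ∈ (SimpleGraph.cycleGraph 5).edgeFinset, symEdge (fun a b => 1 - Wp a b) x e = 0 := by
  have hE : (SimpleGraph.cycleGraph 5).edgeFinset
      = ({s(0,1), s(1,2), s(2,3), s(3,4), s(0,4)} : Finset (Sym2 (Fin 5))) := by decide
  rw [hE, Finset.prod_insert (by decide), Finset.prod_insert (by decide),
    Finset.prod_insert (by decide), Finset.prod_insert (by decide), Finset.prod_singleton]
  have hse : ∀ (i j : Fin 5), symEdge (fun a b => 1 - Wp a b) x s(i, j) = 1 - Wp (x i) (x j) := by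
    intro i j
    simp only [symEdge, Sym2.lift_mk]
    rw [Wp_symm (x j) (x i)]
    ring
  rw [hse, hse, hse, hse, hse]
  by_cases h0 : x 0 ≤ 1/2 <;> by_cases h1 : x 1 ≤ 1/2 <;> by_cases h2 : x 2 ≤ 1/2 <;>
    by_cases h3 : x 3 ≤ 1/2 <;> by_cases h4 : x 4 ≤ 1/2 <;>
    simp only [Wp, h0, h1, h2, h3, h4, iff_true, iff_false, if_true, if_false, not_true,
      not_false_iff, if_neg, not_not] <;>
    norm_num

lemma hd5 : homDensity (SimpleGraph.cycleGraph 5) (fun a b => 1 - Wp a b) = 0 := by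
  rw [homDensity_eq]
  rw [MeasureTheory.integral_congr_ae (μ := Measure.pi fun _ : Fin 5 => unitM)
    (MeasureTheory.ae_of_all _ key5)]
  simp

lemma eCount4 : eCount (SimpleGraph.cycleGraph 4) = 4 := by
  rw [eCount, ← SimpleGraph.coe_edgeFinset, Set.ncard_coe_finset]
  decide

lemma eCount5 : eCount (SimpleGraph.cycleGraph 5) = 5 := by
  rw [eCount, ← SimpleGraph.coe_edgeFinset, Set.ncard_coe_finset]
  decide

theorem C4C5_not_common (p : ℝ) (hp : p ∈ Set.Ioo (0:ℝ) 1)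
    (h : 40 * p ^ 4 + 32 * (1 - p) * p ^ 3 - 5 > 0) :
    ¬ IsCommonPair (SimpleGraph.cycleGraph 4) (SimpleGraph.cycleGraph 5)
        p (1 - p) := by
  intro hcom
  have hg2 : IsGraphon (fun a b => 1 - Wp a b) := by
    refine ⟨measurable_const.sub Wp_meas, fun a b => by dsimp only; rw [Wp_symm], fun a b => ?_⟩
    have := Wp_graphon.2.2 a b
    simp only [Set.mem_Icc] at this ⊢
    constructor <;> linarith [this.1, this.2]
  have key := hcom Wp (fun a b => 1 - Wp a b) Wp_graphon hg2 (fun a b => by ring)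
  rw [hd4, hd5, eCount4, eCount5] at key
  norm_num at key
  -- key : 1 / 8 / (4 * p ^ 3) ≥ p / 4 + (1 - p) / 5
  have hp0 := hp.1
  have hp3 : (0:ℝ) < 4 * p ^ 3 := by positivity
  rw [le_div_iff₀ hp3] at key
  nlinarith [key, h]
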